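/- Let (𝒳, 𝒜) be a measurable space, {P_θ : θ ∈ Θ} a family of probability measures on it, and γ : Θ → ℝ^d an estimand. Let δ₀, g₁, g₂ : 𝒳 → ℝ^d be measurable, let ω ∈ (0,1), and assume all risks below are finite. For i = 1, 2, write R_ω(θ, δ) = ∫ [ω ‖δ(x)−δ₀(x)‖² + (1−ω) ‖δ(x)−γ(θ)‖²] dP_θ(x) and R₀(θ, δ) = ∫ ‖δ(x)−γ(θ)‖² dP_θ(x). Then δ₀ + (1−ω) g₁ dominates δ₀ + (1−ω) g₂ under the balanced squared-error loss (i.e., R_ω(θ, δ₀+(1−ω)g₁) ≤ R_ω(θ, δ₀+(1−ω)g₂) for all θ, with strict inequality for some θ) if and only if δ₀ + g₁ dominates δ₀ + g₂ under squared-error loss (i.e., R₀(θ, δ₀+g₁) ≤ R₀(θ, δ₀+g₂) for all θ, with strict inequality for some θ). -/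

import Mathlib

open MeasureTheory Set

/-- (Corollary 1 of Marchand–Strawderman.) For balanced squared-error loss
with weight `ω ∈ (0,1)` and target `δ₀`, `δ₀ + (1-ω)g₁` dominates `δ₀ + (1-ω)g₂` if and only
if `δ₀ + g₁` dominates `δ₀ + g₂` under squared-error loss. -/
lemma balanced_key {E : Type*} [NormedAddCommGroup E] [InnerProductSpace ℝ E]
    (u v : E) (ω : ℝ) :
    ω * ‖(1-ω) • v‖^2 + (1-ω) * ‖u + (1-ω) • v‖^2
      = (1-ω)^2 * ‖u + v‖^2 + ω * (1-ω) * ‖u‖^2 := by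
  rw [norm_add_sq_real, @norm_add_sq_real _ _ _ u v, real_inner_smul_right]
  simp only [norm_smul, Real.norm_eq_abs, mul_pow, sq_abs]
  ring

lemma risk_decomp {𝒳 : Type*} [MeasurableSpace 𝒳] {d : ℕ}
    (μ : Measure 𝒳) (c : EuclideanSpace ℝ (Fin d))
    (δ₀ g : 𝒳 → EuclideanSpace ℝ (Fin d)) (ω : ℝ)
    (hL : Integrable (fun x =>
      ω * ‖(δ₀ x + (1 - ω) • g x) - δ₀ x‖ ^ 2
        + (1 - ω) * ‖(δ₀ x + (1 - ω) • g x) - c‖ ^ 2) μ)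
    (h0 : Integrable (fun x => ‖(δ₀ x + g x) - c‖ ^ 2) μ) :
    (∫ x, (ω * ‖(δ₀ x + (1 - ω) • g x) - δ₀ x‖ ^ 2
        + (1 - ω) * ‖(δ₀ x + (1 - ω) • g x) - c‖ ^ 2) ∂μ)
      = (1-ω)^2 * (∫ x, ‖(δ₀ x + g x) - c‖ ^ 2 ∂μ)
        + ∫ x, ω * (1-ω) * ‖δ₀ x - c‖ ^ 2 ∂μ := by
  have hpt : ∀ x, ω * ‖(δ₀ x + (1 - ω) • g x) - δ₀ x‖ ^ 2
        + (1 - ω) * ‖(δ₀ x + (1 - ω) • g x) - c‖ ^ 2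
      = (1-ω)^2 * ‖(δ₀ x + g x) - c‖ ^ 2 + ω * (1-ω) * ‖δ₀ x - c‖ ^ 2 := by
    intro x
    have h1 : (δ₀ x + (1 - ω) • g x) - δ₀ x = (1-ω) • g x := by abel
    have h2 : (δ₀ x + (1 - ω) • g x) - c = (δ₀ x - c) + (1-ω) • g x := by abel
    have h3 : (δ₀ x + g x) - c = (δ₀ x - c) + g x := by abel
    rw [h1, h2, h3, balanced_key]
  have hc : Integrable (fun x => ω * (1-ω) * ‖δ₀ x - c‖ ^ 2) μ := by
    have := (hL.congr (Filter.Eventually.of_forall fun x => (hpt x))).sub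
      (h0.const_mul ((1-ω)^2))
    exact this.congr (Filter.Eventually.of_forall fun x => by simp only [Pi.sub_apply]; ring)
  calc (∫ x, (ω * ‖(δ₀ x + (1 - ω) • g x) - δ₀ x‖ ^ 2
        + (1 - ω) * ‖(δ₀ x + (1 - ω) • g x) - c‖ ^ 2) ∂μ)
      = ∫ x, ((1-ω)^2 * ‖(δ₀ x + g x) - c‖ ^ 2 + ω * (1-ω) * ‖δ₀ x - c‖ ^ 2) ∂μ :=
        integral_congr_ae (Filter.Eventually.of_forall hpt)
    _ = (∫ x, (1-ω)^2 * ‖(δ₀ x + g x) - c‖ ^ 2 ∂μ) + ∫ x, ω * (1-ω) * ‖δ₀ x - c‖ ^ 2 ∂μ :=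
        integral_add (h0.const_mul _) hc
    _ = (1-ω)^2 * (∫ x, ‖(δ₀ x + g x) - c‖ ^ 2 ∂μ) + ∫ x, ω * (1-ω) * ‖δ₀ x - c‖ ^ 2 ∂μ := by
        rw [integral_const_mul]

theorem stmt3 {𝒳 : Type*} [MeasurableSpace 𝒳] {Θ : Type*} (d : ℕ)
    (P : Θ → Measure 𝒳) (hP : ∀ θ, IsProbabilityMeasure (P θ))
    (γ : Θ → EuclideanSpace ℝ (Fin d))
    (δ₀ g₁ g₂ : 𝒳 → EuclideanSpace ℝ (Fin d))
    (hδ₀ : Measurable δ₀) (hg₁ : Measurable g₁) (hg₂ : Measurable g₂)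
    (ω : ℝ) (hω : ω ∈ Ioo (0 : ℝ) 1)
    (hint₁ : ∀ θ, Integrable (fun x =>
      ω * ‖(δ₀ x + (1 - ω) • g₁ x) - δ₀ x‖ ^ 2
        + (1 - ω) * ‖(δ₀ x + (1 - ω) • g₁ x) - γ θ‖ ^ 2) (P θ))
    (hint₂ : ∀ θ, Integrable (fun x =>
      ω * ‖(δ₀ x + (1 - ω) • g₂ x) - δ₀ x‖ ^ 2
        + (1 - ω) * ‖(δ₀ x + (1 - ω) • g₂ x) - γ θ‖ ^ 2) (P θ))
    (hint₃ : ∀ θ, Integrable (fun x => ‖(δ₀ x + g₁ x) - γ θ‖ ^ 2) (P θ))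
    (hint₄ : ∀ θ, Integrable (fun x => ‖(δ₀ x + g₂ x) - γ θ‖ ^ 2) (P θ)) :
    ((∀ θ, (∫ x, (ω * ‖(δ₀ x + (1 - ω) • g₁ x) - δ₀ x‖ ^ 2
            + (1 - ω) * ‖(δ₀ x + (1 - ω) • g₁ x) - γ θ‖ ^ 2) ∂(P θ))
          ≤ ∫ x, (ω * ‖(δ₀ x + (1 - ω) • g₂ x) - δ₀ x‖ ^ 2
            + (1 - ω) * ‖(δ₀ x + (1 - ω) • g₂ x) - γ θ‖ ^ 2) ∂(P θ))
      ∧ (∃ θ, (∫ x, (ω * ‖(δ₀ x + (1 - ω) • g₁ x) - δ₀ x‖ ^ 2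
            + (1 - ω) * ‖(δ₀ x + (1 - ω) • g₁ x) - γ θ‖ ^ 2) ∂(P θ))
          < ∫ x, (ω * ‖(δ₀ x + (1 - ω) • g₂ x) - δ₀ x‖ ^ 2
            + (1 - ω) * ‖(δ₀ x + (1 - ω) • g₂ x) - γ θ‖ ^ 2) ∂(P θ)))
    ↔ ((∀ θ, (∫ x, ‖(δ₀ x + g₁ x) - γ θ‖ ^ 2 ∂(P θ))
          ≤ ∫ x, ‖(δ₀ x + g₂ x) - γ θ‖ ^ 2 ∂(P θ))
      ∧ (∃ θ, (∫ x, ‖(δ₀ x + g₁ x) - γ θ‖ ^ 2 ∂(P θ))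
          < ∫ x, ‖(δ₀ x + g₂ x) - γ θ‖ ^ 2 ∂(P θ))) := by
  obtain ⟨hω0, hω1⟩ := hω
  have hk : (0:ℝ) < (1-ω)^2 := by nlinarith
  have e1 : ∀ θ, (∫ x, (ω * ‖(δ₀ x + (1 - ω) • g₁ x) - δ₀ x‖ ^ 2
        + (1 - ω) * ‖(δ₀ x + (1 - ω) • g₁ x) - γ θ‖ ^ 2) ∂(P θ))
      = (1-ω)^2 * (∫ x, ‖(δ₀ x + g₁ x) - γ θ‖ ^ 2 ∂(P θ))
        + ∫ x, ω * (1-ω) * ‖δ₀ x - γ θ‖ ^ 2 ∂(P θ) :=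
    fun θ => risk_decomp (P θ) (γ θ) δ₀ g₁ ω (hint₁ θ) (hint₃ θ)
  have e2 : ∀ θ, (∫ x, (ω * ‖(δ₀ x + (1 - ω) • g₂ x) - δ₀ x‖ ^ 2
        + (1 - ω) * ‖(δ₀ x + (1 - ω) • g₂ x) - γ θ‖ ^ 2) ∂(P θ))
      = (1-ω)^2 * (∫ x, ‖(δ₀ x + g₂ x) - γ θ‖ ^ 2 ∂(P θ))
        + ∫ x, ω * (1-ω) * ‖δ₀ x - γ θ‖ ^ 2 ∂(P θ) :=
    fun θ => risk_decomp (P θ) (γ θ) δ₀ g₂ ω (hint₂ θ) (hint₄ θ)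
  have hle : ∀ θ, ((∫ x, (ω * ‖(δ₀ x + (1 - ω) • g₁ x) - δ₀ x‖ ^ 2
            + (1 - ω) * ‖(δ₀ x + (1 - ω) • g₁ x) - γ θ‖ ^ 2) ∂(P θ))
          ≤ ∫ x, (ω * ‖(δ₀ x + (1 - ω) • g₂ x) - δ₀ x‖ ^ 2
            + (1 - ω) * ‖(δ₀ x + (1 - ω) • g₂ x) - γ θ‖ ^ 2) ∂(P θ))
      ↔ ((∫ x, ‖(δ₀ x + g₁ x) - γ θ‖ ^ 2 ∂(P θ))
          ≤ ∫ x, ‖(δ₀ x + g₂ x) - γ θ‖ ^ 2 ∂(P θ)) := by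
    intro θ
    rw [e1 θ, e2 θ, add_le_add_iff_right, mul_le_mul_iff_of_pos_left hk]
  have hlt : ∀ θ, ((∫ x, (ω * ‖(δ₀ x + (1 - ω) • g₁ x) - δ₀ x‖ ^ 2
            + (1 - ω) * ‖(δ₀ x + (1 - ω) • g₁ x) - γ θ‖ ^ 2) ∂(P θ))
          < ∫ x, (ω * ‖(δ₀ x + (1 - ω) • g₂ x) - δ₀ x‖ ^ 2
            + (1 - ω) * ‖(δ₀ x + (1 - ω) • g₂ x) - γ θ‖ ^ 2) ∂(P θ))
      ↔ ((∫ x, ‖(δ₀ x + g₁ x) - γ θ‖ ^ 2 ∂(P θ))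
          < ∫ x, ‖(δ₀ x + g₂ x) - γ θ‖ ^ 2 ∂(P θ)) := by
    intro θ
    rw [e1 θ, e2 θ, add_lt_add_iff_right, mul_lt_mul_iff_of_pos_left hk]
  constructor
  · rintro ⟨h1, θ, h2⟩
    exact ⟨fun θ => (hle θ).mp (h1 θ), θ, (hlt θ).mp h2⟩
  · rintro ⟨h1, θ, h2⟩
    exact ⟨fun θ => (hle θ).mpr (h1 θ), θ, (hlt θ).mpr h2⟩
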